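/- For every non-negative integer s, the (s+1)-st term of the upper central series of the group U_2 of unitriangular automorphisms of A_2 = K⟨x,y⟩ is Z_{s+1}(U_2) = { (x + f(y), y) : f(y) ∈ K⟨y⟩, deg f(y) ≤ s }, i.e. it consists exactly of the automorphisms fixing y and sending x ↦ x + f(y) with f of degree at most s. -/

import Mathlib

/- STATEMENT 7: for every non-negative integer s, the (s+1)-st term of the upper
   central series of U₂ is Z_{s+1}(U₂) = { (x + f(y), y) : f ∈ K⟨y⟩, deg f ≤ s }.
   "deg f ≤ s" is expressed as: f lies in the K-span of the powers yⁱ, i ≤ s.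
   Here x = ι K 0, y = ι K 1. -/

noncomputable section
open FreeAlgebra

abbrev A2 (K : Type) [Field K] := FreeAlgebra K (Fin 2)

private lemma adjoin_stable {K : Type} [Field K]
    (φ : A2 K ≃ₐ[K] A2 K) (b : K)
    (hy : φ (ι K 1) = ι K 1 + algebraMap K (A2 K) b) :
    ∀ u ∈ Algebra.adjoin K ({ι K 1} : Set (A2 K)),
      φ u ∈ Algebra.adjoin K ({ι K 1} : Set (A2 K)) := by
  intro u hu
  induction hu using Algebra.adjoin_induction with
  | mem v hv =>
      rcases hv with rfl
      rw [hy]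
      exact add_mem (Algebra.self_mem_adjoin_singleton K _) (Subalgebra.algebraMap_mem _ _)
  | algebraMap r => rw [AlgEquiv.commutes]; exact Subalgebra.algebraMap_mem _ _
  | add u v _ _ hu hv => rw [map_add]; exact add_mem hu hv
  | mul u v _ _ hu hv => rw [map_mul]; exact mul_mem hu hv

/-- The group `U₂` of unitriangular automorphisms of the free associative algebra
`A₂ = K⟨x,y⟩` (with `x = ι K 0`, `y = ι K 1`): automorphisms sending
`x ↦ x + f(y)`, `y ↦ y + b·1` with `f ∈ K⟨y⟩`, `b ∈ K`. -/
def U2 (K : Type) [Field K] : Subgroup (A2 K ≃ₐ[K] A2 K) where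
  carrier := {φ | ∃ f ∈ Algebra.adjoin K ({ι K 1} : Set (A2 K)), ∃ b : K,
    φ (ι K 0) = ι K 0 + f ∧ φ (ι K 1) = ι K 1 + algebraMap K (A2 K) b}
  one_mem' := ⟨0, Subalgebra.zero_mem _, 0, by simp, by simp⟩
  mul_mem' := by
    rintro φ ψ ⟨f, hf, b, hfx, hfy⟩ ⟨h, hh, c, hhx, hhy⟩
    refine ⟨f + φ h, add_mem hf (adjoin_stable φ b hfy h hh), b + c, ?_, ?_⟩
    · show φ (ψ (ι K 0)) = _
      rw [hhx, map_add, hfx, add_assoc]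
    · show φ (ψ (ι K 1)) = _
      rw [hhy, map_add, hfy, AlgEquiv.commutes, map_add, add_assoc]
  inv_mem' := by
    rintro φ ⟨f, hf, b, hfx, hfy⟩
    have hsy : φ.symm (ι K 1) = ι K 1 + algebraMap K (A2 K) (-b) := by
      have h1 := congrArg φ.symm hfy
      rw [AlgEquiv.symm_apply_apply, map_add, AlgEquiv.commutes] at h1
      rw [eq_sub_of_add_eq h1.symm, map_neg, sub_eq_add_neg]
    have hsx : φ.symm (ι K 0) = ι K 0 + (-(φ.symm f)) := by
      have h1 := congrArg φ.symm hfx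
      rw [AlgEquiv.symm_apply_apply, map_add] at h1
      rw [eq_sub_of_add_eq h1.symm, sub_eq_add_neg]
    exact ⟨-(φ.symm f), neg_mem (adjoin_stable φ.symm (-b) hsy f hf), -b, hsx, hsy⟩
open Polynomial in
section
variable {K : Type} [Field K]

def ee (K : Type) [Field K] : K[X] →ₐ[K] A2 K := Polynomial.aeval (ι K 1)

lemma ee_inj : Function.Injective (ee K) := by
  have h : ∀ p : K[X], (FreeAlgebra.lift K ![(0 : K[X]), X]) (ee K p) = p := by
    have : (FreeAlgebra.lift K ![(0 : K[X]), X]).comp (ee K) = AlgHom.id K K[X] := by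
      apply Polynomial.algHom_ext
      simp [ee]
    intro p
    exact congrArg (fun f => f p) (congrArg DFunLike.coe this)
  intro p q hpq
  rw [← h p, ← h q, hpq]

lemma ee_C (a : K) : ee K (C a) = algebraMap K (A2 K) a := by simp [ee]

lemma algMap_inj : Function.Injective (algebraMap K (A2 K)) := fun a b h => by
  have : ee K (C a) = ee K (C b) := by rw [ee_C, ee_C, h]
  exact Polynomial.C_injective (ee_inj this)

lemma exists_rep (g : U2 K) : ∃ pb : K[X] × K,
    (g : A2 K ≃ₐ[K] A2 K) (ι K 0) = ι K 0 + ee K pb.1 ∧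
    (g : A2 K ≃ₐ[K] A2 K) (ι K 1) = ι K 1 + algebraMap K (A2 K) pb.2 := by
  obtain ⟨f, hf, b, hx, hy⟩ := g.2
  rw [Algebra.adjoin_singleton_eq_range_aeval] at hf
  obtain ⟨p, hp⟩ := hf
  exact ⟨(p, b), by rw [hx, ← hp]; rfl, hy⟩

def Pg (g : U2 K) : K[X] := (exists_rep g).choose.1
def Bg (g : U2 K) : K := (exists_rep g).choose.2

lemma gx (g : U2 K) : (g : A2 K ≃ₐ[K] A2 K) (ι K 0) = ι K 0 + ee K (Pg g) :=
  (exists_rep g).choose_spec.1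
lemma gy (g : U2 K) : (g : A2 K ≃ₐ[K] A2 K) (ι K 1) = ι K 1 + algebraMap K (A2 K) (Bg g) :=
  (exists_rep g).choose_spec.2

lemma rep_unique (g : U2 K) {p : K[X]} {b : K}
    (hx : (g : A2 K ≃ₐ[K] A2 K) (ι K 0) = ι K 0 + ee K p)
    (hy : (g : A2 K ≃ₐ[K] A2 K) (ι K 1) = ι K 1 + algebraMap K (A2 K) b) :
    Pg g = p ∧ Bg g = b :=
  ⟨ee_inj (add_left_cancel ((gx g).symm.trans hx)),
   algMap_inj (add_left_cancel ((gy g).symm.trans hy))⟩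

lemma U2_ext {g h : U2 K}
    (h0 : (g : A2 K ≃ₐ[K] A2 K) (ι K 0) = (h : A2 K ≃ₐ[K] A2 K) (ι K 0))
    (h1 : (g : A2 K ≃ₐ[K] A2 K) (ι K 1) = (h : A2 K ≃ₐ[K] A2 K) (ι K 1)) : g = h := by
  apply Subtype.ext
  have : (g : A2 K ≃ₐ[K] A2 K).toAlgHom = (h : A2 K ≃ₐ[K] A2 K).toAlgHom := by
    apply FreeAlgebra.hom_ext
    funext i
    fin_cases i <;> simpa
  exact AlgEquiv.coe_algHom_injective this

lemma phi_ee (g : U2 K) (p : K[X]) :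
    (g : A2 K ≃ₐ[K] A2 K) (ee K p) = ee K (taylor (Bg g) p) := by
  have : ((g : A2 K ≃ₐ[K] A2 K) : A2 K →ₐ[K] A2 K).comp (ee K)
      = (ee K).comp (taylorAlgHom (Bg g)) := by
    apply Polynomial.algHom_ext
    simp [ee, gy g]
  exact congrArg (fun f => f p) (congrArg DFunLike.coe this)

lemma rep_mul (g h : U2 K) :
    Pg (g * h) = Pg g + taylor (Bg g) (Pg h) ∧ Bg (g * h) = Bg g + Bg h := by
  apply rep_unique
  · show (g : A2 K ≃ₐ[K] A2 K) ((h : A2 K ≃ₐ[K] A2 K) (ι K 0)) = _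
    rw [gx h, map_add, gx g, phi_ee, map_add, add_assoc]
  · show (g : A2 K ≃ₐ[K] A2 K) ((h : A2 K ≃ₐ[K] A2 K) (ι K 1)) = _
    rw [gy h, map_add, gy g, AlgEquiv.commutes, map_add, add_assoc]

lemma rep_one : Pg (1 : U2 K) = 0 ∧ Bg (1 : U2 K) = 0 := by
  apply rep_unique <;> simp

end
open Polynomial in
section
variable {K : Type} [Field K]

def Fh (p : K[X]) (b : K) : A2 K →ₐ[K] A2 K :=
  FreeAlgebra.lift K ![ι K 0 + ee K p, ι K 1 + algebraMap K (A2 K) b]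

lemma Fh_x (p : K[X]) (b : K) : Fh p b (ι K 0) = ι K 0 + ee K p := by simp [Fh]
lemma Fh_y (p : K[X]) (b : K) : Fh p b (ι K 1) = ι K 1 + algebraMap K (A2 K) b := by
  simp [Fh]

lemma Fh_ee (p : K[X]) (b : K) (q : K[X]) : Fh p b (ee K q) = ee K (taylor b q) := by
  have : (Fh p b).comp (ee K) = (ee K).comp (taylorAlgHom b) := by
    apply Polynomial.algHom_ext
    simp [ee, Fh_y]
  exact congrArg (fun f => f q) (congrArg DFunLike.coe this)

lemma Fh_comp (p : K[X]) (b : K) (p' : K[X]) (b' : K) :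
    (Fh p b).comp (Fh p' b') = Fh (p + taylor b p') (b + b') := by
  apply FreeAlgebra.hom_ext
  funext i
  fin_cases i
  · show Fh p b (Fh p' b' (ι K 0)) = Fh (p + taylor b p') (b + b') (ι K 0)
    rw [Fh_x, map_add, Fh_x, Fh_ee, Fh_x, map_add, add_assoc]
  · show Fh p b (Fh p' b' (ι K 1)) = Fh (p + taylor b p') (b + b') (ι K 1)
    rw [Fh_y, map_add, Fh_y, AlgHom.commutes, Fh_y, map_add, add_assoc]

lemma Fh_id : Fh (0 : K[X]) 0 = AlgHom.id K (A2 K) := by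
  apply FreeAlgebra.hom_ext
  funext i
  fin_cases i
  · show Fh (0 : K[X]) 0 (ι K 0) = ι K 0
    rw [Fh_x]; simp
  · show Fh (0 : K[X]) 0 (ι K 1) = ι K 1
    rw [Fh_y]; simp

def mkU (p : K[X]) (b : K) : U2 K :=
  ⟨AlgEquiv.ofAlgHom (Fh p b) (Fh (-(taylor (-b) p)) (-b))
    (by rw [Fh_comp]
        have h1 : p + taylor b (-(taylor (-b) p)) = 0 := by
          rw [map_neg, taylor_taylor, add_neg_cancel, taylor_zero, add_neg_cancel]
        rw [h1, add_neg_cancel, Fh_id])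
    (by rw [Fh_comp]
        have h1 : -(taylor (-b) p) + taylor (-b) p = 0 := neg_add_cancel _
        rw [h1, neg_add_cancel, Fh_id]),
   ⟨ee K p, by rw [Algebra.adjoin_singleton_eq_range_aeval]; exact ⟨p, rfl⟩, b,
    Fh_x p b, Fh_y p b⟩⟩

lemma rep_mk (p : K[X]) (b : K) : Pg (mkU p b) = p ∧ Bg (mkU p b) = b :=
  rep_unique _ (Fh_x p b) (Fh_y p b)

lemma rep_comm (g h : U2 K) :
    Bg (g * h * g⁻¹ * h⁻¹) = 0 ∧
    Pg (g * h * g⁻¹ * h⁻¹)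
      = Pg g + taylor (Bg g) (Pg h) - (Pg h + taylor (Bg h) (Pg g)) := by
  set c := g * h * g⁻¹ * h⁻¹ with hc
  have hmul : c * (h * g) = g * h := by rw [hc]; group
  have h1 := rep_mul c (h * g)
  have h2 := rep_mul h g
  have h3 := rep_mul g h
  rw [hmul] at h1
  have hB : Bg c = 0 := by
    have := h1.2
    rw [h3.2, h2.2] at this
    linear_combination -this
  refine ⟨hB, ?_⟩
  have := h1.1
  rw [h3.1, h2.1, hB, taylor_zero] at this
  linear_combination -this

end
open Polynomial in
section
variable {K : Type} [Field K]

lemma taylor_ne_zero' {p : K[X]} (hp : p ≠ 0) (b : K) : taylor b p ≠ 0 :=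
  fun h => hp (taylor_injective b (by rw [h, map_zero]))

lemma degree_taylor (p : K[X]) (b : K) : (taylor b p).degree = p.degree := by
  rcases eq_or_ne p 0 with rfl | hp
  · simp
  · rw [degree_eq_natDegree (taylor_ne_zero' hp b), degree_eq_natDegree hp, natDegree_taylor]

lemma leadingCoeff_taylor (p : K[X]) (b : K) : (taylor b p).leadingCoeff = p.leadingCoeff := by
  rcases eq_or_ne p 0 with rfl | hp
  · simp
  · rw [taylor_apply, leadingCoeff_comp (by rw [natDegree_X_add_C]; exact one_ne_zero),
      (monic_X_add_C b).leadingCoeff, one_pow, mul_one]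

lemma degree_taylor_sub_lt {p : K[X]} (hp : p ≠ 0) (b : K) :
    (taylor b p - p).degree < p.degree := by
  have := degree_sub_lt (_root_.degree_taylor p b) (taylor_ne_zero' hp b)
    (leadingCoeff_taylor p b)
  rwa [_root_.degree_taylor] at this

lemma wb_lt_succ {a : WithBot ℕ} {s : ℕ} :
    a < ((s + 1 : ℕ) : WithBot ℕ) ↔ a ≤ (s : WithBot ℕ) := by
  cases a with
  | bot => exact iff_of_true (by exact_mod_cast WithBot.bot_lt_coe (s + 1)) bot_le
  | coe n =>
    rw [Nat.cast_withBot, Nat.cast_withBot, WithBot.coe_lt_coe, WithBot.coe_le_coe]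
    omega

lemma degree_shift_pow [CharZero K] {b : K} (hb : b ≠ 0) (s : ℕ) :
    ¬ (taylor b ((X : K[X]) ^ (s + 1)) - X ^ (s + 1)).degree < (s : WithBot ℕ) := by
  intro hlt
  have hc : (taylor b ((X : K[X]) ^ (s + 1)) - X ^ (s + 1)).coeff s = b * (s + 1) := by
    rw [coeff_sub, taylor_apply, X_pow_comp, coeff_X_add_C_pow, coeff_X_pow]
    have h1 : s + 1 - s = 1 := by omega
    have h2 : (s + 1).choose s = s + 1 := Nat.choose_succ_self_right s
    rw [h1, h2, pow_one]
    simp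
  have hne : (taylor b ((X : K[X]) ^ (s + 1)) - X ^ (s + 1)).coeff s ≠ 0 := by
    rw [hc]
    refine mul_ne_zero hb ?_
    have h2 : ((s + 1 : ℕ) : K) ≠ 0 := Nat.cast_ne_zero.mpr (Nat.succ_ne_zero s)
    push_cast at h2
    exact h2
  exact absurd hlt (not_lt.mpr (le_degree_of_ne_zero hne))

lemma degree_le_of_shift1 [CharZero K] {p : K[X]} {s : ℕ}
    (h : (taylor 1 p - p).degree < (s : WithBot ℕ)) :
    p.degree < ((s + 1 : ℕ) : WithBot ℕ) := by
  by_contra hcon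
  push_neg at hcon
  have hp : p ≠ 0 := by
    intro h0
    rw [h0, degree_zero] at hcon
    exact absurd hcon (by simp)
  set n := p.natDegree with hn
  have hdeg : p.degree = (n : WithBot ℕ) := degree_eq_natDegree hp
  have hns : s + 1 ≤ n := by
    rw [hdeg] at hcon
    exact_mod_cast hcon
  have hsplit : p.eraseLead + C p.leadingCoeff * X ^ n = p := eraseLead_add_C_mul_X_pow p
  have hcoeff : (taylor (1 : K) p - p).coeff (n - 1) = p.leadingCoeff * n := by
    have hlin : taylor (1 : K) p - p
        = (taylor 1 p.eraseLead - p.eraseLead)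
          + (taylor 1 (C p.leadingCoeff * X ^ n) - C p.leadingCoeff * X ^ n) := by
      conv_lhs => rw [← hsplit]
      rw [map_add]
      ring
    rw [hlin, coeff_add]
    have h1 : (taylor (1 : K) p.eraseLead - p.eraseLead).coeff (n - 1) = 0 := by
      apply coeff_eq_zero_of_degree_lt
      rcases eq_or_ne p.eraseLead 0 with he | he
      · rw [he, map_zero, sub_zero, degree_zero]
        exact WithBot.bot_lt_coe _
      · have h3 := degree_taylor_sub_lt he (1 : K)
        have h5 : p.eraseLead.natDegree < n :=
          (natDegree_lt_iff_degree_lt he).mpr (by rw [← hdeg]; exact degree_eraseLead_lt hp)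
        have h4 : p.eraseLead.degree ≤ ((n - 1 : ℕ) : WithBot ℕ) := by
          rw [degree_eq_natDegree he]
          exact_mod_cast (by omega : p.eraseLead.natDegree ≤ n - 1)
        exact lt_of_lt_of_le h3 h4
    have h2 : (taylor (1 : K) (C p.leadingCoeff * X ^ n) - C p.leadingCoeff * X ^ n).coeff (n - 1)
        = p.leadingCoeff * n := by
      rw [coeff_sub, taylor_apply, mul_comp, C_comp, X_pow_comp, coeff_C_mul, coeff_C_mul,
        coeff_X_add_C_pow, coeff_X_pow]
      have e1 : n - (n - 1) = 1 := by omega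
      have e2 : n.choose (n - 1) = n := by
        rw [Nat.choose_symm (by omega : 1 ≤ n), Nat.choose_one_right]
      have e3 : ¬ (n - 1 = n) := by omega
      rw [e1, e2, pow_one, if_neg e3, one_mul, mul_zero, sub_zero]
    rw [h1, h2, zero_add]
  have hne : (taylor (1 : K) p - p).coeff (n - 1) ≠ 0 := by
    rw [hcoeff]
    exact mul_ne_zero (leadingCoeff_ne_zero.mpr hp) (Nat.cast_ne_zero.mpr (by omega))
  have hge := le_degree_of_ne_zero hne
  have hsle : ((s : ℕ) : WithBot ℕ) ≤ ((n - 1 : ℕ) : WithBot ℕ) := by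
    exact_mod_cast (by omega : s ≤ n - 1)
  exact absurd h (not_lt.mpr (le_trans hsle hge))

end
open Polynomial in
section
variable {K : Type} [Field K] [CharZero K]

lemma key : ∀ (s : ℕ) (g : U2 K), g ∈ upperCentralSeries (U2 K) s ↔
    Bg g = 0 ∧ (Pg g).degree < (s : WithBot ℕ)
  | 0, g => by
    rw [upperCentralSeries, upperCentralSeries_zero, Subgroup.mem_bot]
    constructor
    · rintro rfl
      refine ⟨rep_one.2, ?_⟩
      rw [rep_one.1, degree_zero]
      rw [Nat.cast_withBot]
      exact WithBot.bot_lt_coe 0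
    · rintro ⟨hb, hd⟩
      have hp : Pg g = 0 := by
        rw [← degree_eq_bot]
        exact Nat.WithBot.lt_zero_iff.mp (by rw [Nat.cast_withBot] at hd; exact_mod_cast hd)
      apply U2_ext
      · rw [gx g, hp, map_zero, add_zero]
        simp
      · rw [gy g, hb, map_zero, add_zero]
        simp
  | (s + 1), g => by
    rw [upperCentralSeries, mem_upperCentralSeries_succ_iff]
    simp only [commutatorElement_def]
    constructor
    · intro H
      have hb : Bg g = 0 := by
        by_contra hb
        have h1 := ((key s _).mp (H (mkU ((X : K[X]) ^ (s + 1)) 0))).2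
        have hP := (rep_comm g (mkU ((X : K[X]) ^ (s + 1)) 0)).2
        rw [(rep_mk ((X : K[X]) ^ (s + 1)) 0).1, (rep_mk ((X : K[X]) ^ (s + 1)) 0).2,
          taylor_zero] at hP
        have h2 : Pg (g * mkU ((X : K[X]) ^ (s + 1)) 0 * g⁻¹ * (mkU ((X : K[X]) ^ (s + 1)) 0)⁻¹)
            = taylor (Bg g) ((X : K[X]) ^ (s + 1)) - (X : K[X]) ^ (s + 1) := by
          rw [hP]; ring
        rw [h2] at h1
        exact degree_shift_pow hb s h1
      refine ⟨hb, ?_⟩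
      have h1 := ((key s _).mp (H (mkU (0 : K[X]) 1))).2
      have hP := (rep_comm g (mkU (0 : K[X]) 1)).2
      rw [(rep_mk (0 : K[X]) 1).1, (rep_mk (0 : K[X]) 1).2, hb, taylor_zero] at hP
      have h2 : Pg (g * mkU (0 : K[X]) 1 * g⁻¹ * (mkU (0 : K[X]) 1)⁻¹)
          = -(taylor 1 (Pg g) - Pg g) := by
        rw [hP]; ring
      rw [h2, degree_neg] at h1
      exact degree_le_of_shift1 h1
    · rintro ⟨hb, hd⟩ h
      rw [← upperCentralSeries, key s]
      refine ⟨(rep_comm g h).1, ?_⟩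
      have hP := (rep_comm g h).2
      rw [hb, taylor_zero] at hP
      have h2 : Pg (g * h * g⁻¹ * h⁻¹) = -(taylor (Bg h) (Pg g) - Pg g) := by
        rw [hP]; ring
      rw [h2, degree_neg]
      rcases eq_or_ne (Pg g) 0 with hz | hz
      · rw [hz, map_zero, sub_zero, degree_zero, Nat.cast_withBot]
        exact WithBot.bot_lt_coe s
      · exact lt_of_lt_of_le (degree_taylor_sub_lt hz (Bg h)) (wb_lt_succ.mp hd)

omit [CharZero K] in
lemma span_pow_iff (s : ℕ) (p : K[X]) :
    ee K p ∈ Submodule.span K ((fun i : ℕ => (ι K 1 : A2 K) ^ i) '' Set.Iic s)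
      ↔ p.degree ≤ (s : WithBot ℕ) := by
  classical
  have hset : ((fun i : ℕ => (X : K[X]) ^ i) '' Set.Iic s)
      = ↑((Finset.range (s + 1)).image fun n => (X : K[X]) ^ n) := by
    rw [Finset.coe_image, Finset.coe_range]
    apply congrArg
    ext i
    simp [Nat.lt_succ_iff, Set.mem_Iic]
  have hspan : Submodule.span K ((fun i : ℕ => (X : K[X]) ^ i) '' Set.Iic s)
      = degreeLE K s := by
    rw [hset, ← degreeLE_eq_span_X_pow]
  have himg : ((fun i : ℕ => (ι K 1 : A2 K) ^ i) '' Set.Iic s)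
      = (ee K).toLinearMap '' ((fun i : ℕ => (X : K[X]) ^ i) '' Set.Iic s) := by
    rw [Set.image_image]
    apply Set.image_congr
    intro i _
    simp [ee]
  rw [himg, Submodule.span_image, hspan]
  constructor
  · intro hmem
    obtain ⟨q, hq, hqe⟩ := Submodule.mem_map.mp hmem
    have hq' : q = p := ee_inj hqe
    rw [← hq']
    exact mem_degreeLE.mp hq
  · intro hd
    exact Submodule.mem_map_of_mem (mem_degreeLE.mpr hd)

end

theorem upperCentralSeries_U2 (K : Type) [Field K] [CharZero K] (s : ℕ) (φ : U2 K) :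
    φ ∈ upperCentralSeries ↥(U2 K) (s + 1) ↔
      ∃ f ∈ Submodule.span K ((fun i : ℕ => (ι K 1 : A2 K) ^ i) '' Set.Iic s),
        (φ : A2 K ≃ₐ[K] A2 K) (ι K 0) = ι K 0 + f ∧
        (φ : A2 K ≃ₐ[K] A2 K) (ι K 1) = ι K 1 := by
  rw [key (s + 1) φ]
  constructor
  · rintro ⟨hb, hd⟩
    refine ⟨ee K (Pg φ), ?_, gx φ, ?_⟩
    · exact (span_pow_iff s (Pg φ)).mpr (wb_lt_succ.mp hd)
    · rw [gy φ, hb, map_zero, add_zero]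
  · rintro ⟨f, hf, hx, hy⟩
    have hfe : ee K (Pg φ) = f := add_left_cancel ((gx φ).symm.trans hx)
    have hb : Bg φ = 0 := by
      apply algMap_inj (K := K)
      rw [map_zero]
      exact add_eq_left.mp ((gy φ).symm.trans hy)
    refine ⟨hb, wb_lt_succ.mpr ?_⟩
    rw [← hfe] at hf
    exact (span_pow_iff s (Pg φ)).mp hf
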